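/- (Proposition: bound on the mismatch-induced estimator noise; Proposition 8 of the paper.) Suppose the SSTP setup, nominal consistency, differentiability, and mismatch-correction assumptions of the context hold. Then for any compact set X ⊆ 𝕏 there exist σ_w and σ_α of class 𝒦∞ such that for all z = (x,u) ∈ X × 𝕌 and all α = (s_sp, w_P), α⁺ ∈ 𝒜_c, the noises w := f_P(x + Δx_s(α), u, w_P) − f(x, u, d_s(α)) − Δx_s(α⁺), w_d := d_s(α⁺) − d_s(α), v := h_P(x + Δx_s(α), u, w_P) − h(x, u, d_s(α)) satisfy ‖(w, w_d, v)‖ ≤ σ_w(‖w_P‖)·‖z − z_s(β)‖ + σ_α(‖α⁺ − α‖), where β := (s_sp, d_s(α)). -/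

import Mathlib

open scoped BigOperators

noncomputable section

abbrev Vec (n : ℕ) : Type := EuclideanSpace ℝ (Fin n)

/-- Parameters `β = (r_sp, u_sp, y_sp, d)` of the steady-state target problem. -/
abbrev Param (nu ny nd nr : ℕ) : Type := Vec nr × Vec nu × Vec ny × Vec nd

/-- Data of the steady-state target problem (SSTP) setup. -/
structure SSTPData (n nu ny nd nr nc : ℕ) where
  X : Set (Vec n)
  U : Set (Vec nu)
  Y : Set (Vec ny)
  D : Set (Vec nd)
  f : Vec n → Vec nu → Vec nd → Vec n
  h : Vec n → Vec nu → Vec nd → Vec ny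
  g : Vec nu → Vec ny → Vec nr
  cbar : Vec nu → Vec ny → Fin nc → ℝ
  bbar : Fin nc → ℝ
  ls : Vec nu → Vec ny → ℝ

namespace SSTPData

variable {n nu ny nd nr nc : ℕ} (S : SSTPData n nu ny nd nr nc)

/-- Tightened input-output constraint set `Z̄_y`. -/
def Zbar : Set (Vec nu × Vec ny) :=
  {p | p.1 ∈ S.U ∧ p.2 ∈ S.Y ∧ ∀ i, S.cbar p.1 p.2 i + S.bbar i ≤ 0}

/-- Offset-free steady-state pairs `𝒵_O(r_sp, d)`. -/
def ZO (rsp : Vec nr) (d : Vec nd) : Set (Vec n × Vec nu) :=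
  {z | z.1 ∈ S.X ∧ z.2 ∈ S.U ∧ z.1 = S.f z.1 z.2 d ∧
    (z.2, S.h z.1 z.2 d) ∈ S.Zbar ∧ rsp = S.g z.2 (S.h z.1 z.2 d)}

/-- Feasible SSTP parameters `ℬ`. -/
def B : Set (Param nu ny nd nr) :=
  {β | (β.2.1, β.2.2.1) ∈ S.Zbar ∧ β.2.2.2 ∈ S.D ∧ (S.ZO β.1 β.2.2.2).Nonempty}

/-- SSTP objective. -/
def Vs (β : Param nu ny nd nr) (z : Vec n × Vec nu) : ℝ :=
  S.ls (z.2 - β.2.1) (S.h z.1 z.2 β.2.2.2 - β.2.2.1)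

/-- The perturbed parameter set `B̂_c` built from `B_c` and `δ0`. -/
def Bhat (Bc : Set (Param nu ny nd nr)) (δ0 : ℝ) : Set (Param nu ny nd nr) :=
  {βh | βh.2.2.2 ∈ S.D ∧
    ∃ d : Vec nd, (βh.1, βh.2.1, βh.2.2.1, d) ∈ Bc ∧ ‖d - βh.2.2.2‖ ≤ δ0}

end SSTPData

/-- Standing assumptions on the SSTP setup. -/
structure SSTPAssumptions {n nu ny nd nr nc : ℕ} (S : SSTPData n nu ny nd nr nc) : Prop where
  hXcl : IsClosed S.X
  hYcl : IsClosed S.Y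
  hUcp : IsCompact S.U
  hDcp : IsCompact S.D
  hX0 : (0 : Vec n) ∈ S.X
  hU0 : (0 : Vec nu) ∈ S.U
  hY0 : (0 : Vec ny) ∈ S.Y
  hD0 : (0 : Vec nd) ∈ S.D
  hf : Continuous fun p : Vec n × Vec nu × Vec nd => S.f p.1 p.2.1 p.2.2
  hh : Continuous fun p : Vec n × Vec nu × Vec nd => S.h p.1 p.2.1 p.2.2
  hg : Continuous fun p : Vec nu × Vec ny => S.g p.1 p.2
  hf0 : S.f 0 0 0 = 0
  hh0 : S.h 0 0 0 = 0
  hg0 : S.g 0 0 = 0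
  hcbar : Continuous fun p : Vec nu × Vec ny => S.cbar p.1 p.2
  hbbar : ∀ i, 0 < S.bbar i
  hback : ∀ i, S.cbar 0 0 i + S.bbar i < 0
  hls_cont : Continuous fun p : Vec nu × Vec ny => S.ls p.1 p.2
  hls_nonneg : ∀ u y, 0 ≤ S.ls u y
  hsstp_exist : ∀ β ∈ S.B, IsCompact (S.ZO β.1 β.2.2.2) ∨
    ∀ z : ℕ → Vec n × Vec nu, (∀ k, z k ∈ S.ZO β.1 β.2.2.2) →
      Filter.Tendsto (fun k => ‖z k‖) Filter.atTop Filter.atTop →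
      Filter.Tendsto (fun k => S.Vs β (z k)) Filter.atTop Filter.atTop

/-- Class 𝒦 functions `[0,∞) → [0,∞)`. -/
def IsClassK (φ : ℝ → ℝ) : Prop :=
  ContinuousOn φ (Set.Ici 0) ∧ StrictMonoOn φ (Set.Ici 0) ∧ φ 0 = 0 ∧ ∀ t, 0 ≤ t → 0 ≤ φ t

/-- Class 𝒦∞ functions. -/
def IsClassKInf (φ : ℝ → ℝ) : Prop :=
  IsClassK φ ∧ Filter.Tendsto φ Filter.atTop Filter.atTop


/-- Auxiliary: every bounded nondecreasing nonnegative function vanishing (in the limit)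
at `0⁺` is dominated on `[0,∞)` by a class-𝒦∞ function. -/
lemma lemA_classKInf (h : ℝ → ℝ) (C : ℝ)
    (hmono : Monotone h) (hnn : ∀ t, 0 ≤ h t) (hbd : ∀ t, h t ≤ C)
    (hsmall : ∀ ε : ℝ, 0 < ε → ∃ δ : ℝ, 0 < δ ∧ h δ ≤ ε) :
    ∃ σ : ℝ → ℝ, IsClassKInf σ ∧ ∀ t, 0 ≤ t → h t ≤ σ t := by
  have hC0 : (0:ℝ) ≤ C := (hnn 0).trans (hbd 0)
  set D : ℝ := C + 1 with hD
  have hDpos : 0 < D := by positivity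
  haveI : Nonempty {x : ℝ // 0 < x} := ⟨⟨1, one_pos⟩⟩
  set σ0 : ℝ → ℝ := fun t => ⨅ δ : {x : ℝ // 0 < x}, (h δ.1 + D * max t 0 / δ.1) with hσ0
  have term_nn : ∀ (t : ℝ) (δ : {x : ℝ // 0 < x}), 0 ≤ h δ.1 + D * max t 0 / δ.1 := by
    intro t δ
    have := hnn δ.1
    have h1 : 0 ≤ D * max t 0 / δ.1 := by
      apply div_nonneg (mul_nonneg hDpos.le (le_max_right _ _)) δ.2.le
    linarith
  have hbdd : ∀ t, BddBelow (Set.range fun δ : {x : ℝ // 0 < x} => h δ.1 + D * max t 0 / δ.1) := by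
    intro t
    exact ⟨0, by rintro y ⟨δ, rfl⟩; exact term_nn t δ⟩
  have le1 : ∀ (t : ℝ) (δ : {x : ℝ // 0 < x}), σ0 t ≤ h δ.1 + D * max t 0 / δ.1 :=
    fun t δ => ciInf_le (hbdd t) δ
  have ge0 : ∀ t, 0 ≤ σ0 t := fun t => le_ciInf (term_nn t)
  have mono : Monotone σ0 := by
    intro t t' htt'
    refine le_ciInf fun δ => (le1 t δ).trans ?_
    have : max t 0 ≤ max t' 0 := max_le_max htt' le_rfl
    gcongr
    exact δ.2.le
  have hle : ∀ t, 0 ≤ t → h t ≤ σ0 t := by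
    intro t ht
    refine le_ciInf fun δ => ?_
    rcases le_or_gt t δ.1 with h1 | h1
    · have : h t ≤ h δ.1 := hmono h1
      have h2 : 0 ≤ D * max t 0 / δ.1 := by
        apply div_nonneg (mul_nonneg hDpos.le (le_max_right _ _)) δ.2.le
      linarith
    · have hmax : max t 0 = t := max_eq_left ht
      rw [hmax]
      have h2 : D ≤ D * t / δ.1 := by
        rw [le_div_iff₀ δ.2]
        nlinarith [δ.2, h1, hDpos]
      have := hbd t
      have := hnn δ.1
      linarith
  have zero : σ0 0 = 0 := by
    refine le_antisymm ?_ (ge0 0)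
    refine le_of_forall_pos_le_add fun ε hε => ?_
    obtain ⟨δ, hδ, hδε⟩ := hsmall ε hε
    have := le1 0 ⟨δ, hδ⟩
    simp only [max_self, mul_zero, zero_div] at this
    linarith
  have scale : ∀ c : ℝ, 0 < c → ∀ r : ℝ, 0 ≤ r → r ≤ 1 → r * σ0 c ≤ σ0 (r * c) := by
    intro c hc r hr hr1
    refine le_ciInf fun δ => ?_
    have h1 : r * σ0 c ≤ r * (h δ.1 + D * max c 0 / δ.1) :=
      mul_le_mul_of_nonneg_left (le1 c δ) hr
    have hmaxc : max c 0 = c := max_eq_left hc.le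
    have hmaxrc : max (r * c) 0 = r * c := max_eq_left (mul_nonneg hr hc.le)
    rw [hmaxc] at h1
    rw [hmaxrc]
    have h2 : r * (h δ.1 + D * c / δ.1) = r * h δ.1 + D * (r * c) / δ.1 := by ring
    have h3 : r * h δ.1 ≤ h δ.1 := by nlinarith [hnn δ.1]
    linarith
  have subadd : ∀ t s : ℝ, 0 ≤ t → 0 ≤ s → σ0 (t + s) ≤ σ0 t + σ0 s := by
    intro t s ht hs
    rcases eq_or_lt_of_le (by linarith : (0:ℝ) ≤ t + s) with hc | hc
    · have ht0 : t = 0 := by linarith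
      have hs0 : s = 0 := by linarith
      simp [ht0, hs0, zero]
    · set c := t + s with hcdef
      have h1 : (t / c) * σ0 c ≤ σ0 t := by
        have := scale c hc (t / c) (div_nonneg ht hc.le) (by rw [div_le_one hc]; linarith)
        rwa [div_mul_cancel₀ _ hc.ne'] at this
      have h2 : (s / c) * σ0 c ≤ σ0 s := by
        have := scale c hc (s / c) (div_nonneg hs hc.le) (by rw [div_le_one hc]; linarith)
        rwa [div_mul_cancel₀ _ hc.ne'] at this
      have h3 : (t / c) * σ0 c + (s / c) * σ0 c = σ0 c := by
        field_simp
        rw [hcdef]; ring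
      linarith
  have modulus : ∀ t s : ℝ, 0 ≤ t → 0 ≤ s → |σ0 t - σ0 s| ≤ σ0 |t - s| := by
    intro t s ht hs
    rcases le_total s t with h1 | h1
    · have habs : |t - s| = t - s := abs_of_nonneg (by linarith)
      rw [habs, abs_le]
      constructor
      · have := ge0 (t - s); have := mono h1; linarith
      · have h2 : σ0 t ≤ σ0 s + σ0 (t - s) := by
          have := subadd s (t - s) hs (by linarith)
          simpa [add_sub_cancel] using this
        linarith
    · have habs : |t - s| = s - t := by
        rw [abs_sub_comm]; exact abs_of_nonneg (by linarith)
      rw [habs, abs_le]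
      constructor
      · have h2 : σ0 s ≤ σ0 t + σ0 (s - t) := by
          have := subadd t (s - t) ht (by linarith)
          simpa [add_sub_cancel] using this
        linarith
      · have := ge0 (s - t); have := mono h1; linarith
  have cont0 : ∀ ε : ℝ, 0 < ε → ∃ δ : ℝ, 0 < δ ∧ ∀ s, 0 ≤ s → s ≤ δ → σ0 s ≤ ε := by
    intro ε hε
    obtain ⟨δ1, hδ1, hδ1ε⟩ := hsmall (ε / 2) (by linarith)
    refine ⟨min δ1 (ε * δ1 / (2 * D)), lt_min hδ1 (by positivity), fun s hs hsδ => ?_⟩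
    have h1 := le1 s ⟨δ1, hδ1⟩
    have hmax : max s 0 = s := max_eq_left hs
    rw [hmax] at h1
    have h2 : s ≤ ε * δ1 / (2 * D) := hsδ.trans (min_le_right _ _)
    have h3 : D * s / δ1 ≤ ε / 2 := by
      rw [div_le_iff₀ hδ1]
      calc D * s ≤ D * (ε * δ1 / (2 * D)) := by nlinarith
        _ = ε / 2 * δ1 := by field_simp
    linarith
  refine ⟨fun t => max t 0 + σ0 t, ⟨⟨?_, ?_, ?_, ?_⟩, ?_⟩, ?_⟩
  · have hcσ0 : ContinuousOn σ0 (Set.Ici 0) := by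
      intro t0 ht0
      rw [Metric.continuousWithinAt_iff]
      intro ε hε
      obtain ⟨δ, hδ, hδε⟩ := cont0 (ε / 2) (by linarith)
      refine ⟨δ, hδ, fun {t} ht hdist => ?_⟩
      have ht' : (0:ℝ) ≤ t := ht
      have habs : |t - t0| ≤ δ := by
        rw [Real.dist_eq] at hdist; linarith [hdist.le]
      have hmod := modulus t t0 ht' ht0
      have h2 : σ0 |t - t0| ≤ ε / 2 := hδε _ (abs_nonneg _) habs
      rw [Real.dist_eq]
      calc |σ0 t - σ0 t0| ≤ σ0 |t - t0| := hmod
        _ ≤ ε / 2 := h2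
        _ < ε := by linarith
    exact ((continuous_id.max continuous_const).continuousOn).add hcσ0
  · intro t ht t' ht' htt'
    have h1 : max t 0 < max t' 0 := by
      rw [max_eq_left ht, max_eq_left ht']; exact htt'
    exact add_lt_add_of_lt_of_le h1 (mono htt'.le)
  · simp [zero]
  · intro t ht
    have h1 := ge0 t
    have h2 : (0:ℝ) ≤ max t 0 := le_max_right _ _
    positivity
  · refine Filter.tendsto_atTop_mono (fun t => ?_) (Filter.tendsto_id (α := ℝ))
    show t ≤ max t 0 + σ0 t
    linarith [ge0 t, le_max_left t 0]
  · intro t ht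
    show h t ≤ max t 0 + σ0 t
    linarith [hle t ht, le_max_right t 0]

/-- Mean value inequality wrapper with fully explicit arguments. -/
lemma mvt_explicit {E G : Type*} [NormedAddCommGroup E] [NormedSpace ℝ E]
    [NormedAddCommGroup G] [NormedSpace ℝ G]
    (g : E → G) (Dg : E → E →L[ℝ] G) (s : Set E) (hs : Convex ℝ s)
    (hg : ∀ ζ, HasFDerivAt g (Dg ζ) ζ) (C : ℝ) (hb : ∀ ζ ∈ s, ‖Dg ζ‖ ≤ C)
    (z1 z2 : E) (h1 : z1 ∈ s) (h2 : z2 ∈ s) : ‖g z1 - g z2‖ ≤ C * ‖z1 - z2‖ :=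
  Convex.norm_image_sub_le_of_norm_hasFDerivWithin_le
    (fun ζ _ => (hg ζ).hasFDerivWithinAt) hb hs h2 h1

/-- Auxiliary: a continuous nonnegative function on a compact set that vanishes whenever
a continuous "size" functional vanishes is dominated by a class-𝒦∞ function of that size. -/
lemma lemC_classKInf {E F : Type*} [NormedAddCommGroup E] [NormedAddCommGroup F]
    (K : Set E) (hK : IsCompact K)
    (Θ : E → ℝ) (hΘ : Continuous Θ) (hΘnn : ∀ p, 0 ≤ Θ p)
    (π : E → F) (hπ : Continuous π)
    (hvan : ∀ p ∈ K, π p = 0 → Θ p = 0) :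
    ∃ σ : ℝ → ℝ, IsClassKInf σ ∧ ∀ p ∈ K, Θ p ≤ σ ‖π p‖ := by
  set h : ℝ → ℝ := fun t => sSup (Θ '' (K ∩ {p | ‖π p‖ ≤ t})) with hh
  have hbddK : BddAbove (Θ '' K) := (hK.image hΘ).bddAbove
  have hbdd : ∀ t, BddAbove (Θ '' (K ∩ {p | ‖π p‖ ≤ t})) :=
    fun t => hbddK.mono (Set.image_mono Set.inter_subset_left)
  have hnn : ∀ t, 0 ≤ h t := by
    intro t
    rcases Set.eq_empty_or_nonempty (Θ '' (K ∩ {p | ‖π p‖ ≤ t})) with he | hne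
    · simp [hh, he]
    · obtain ⟨y, ⟨p, hp, rfl⟩⟩ := hne
      exact (hΘnn p).trans (le_csSup (hbdd t) ⟨p, hp, rfl⟩)
  have hmono : Monotone h := by
    intro t t' htt'
    rcases Set.eq_empty_or_nonempty (Θ '' (K ∩ {p | ‖π p‖ ≤ t})) with he | hne
    · rw [hh]; simp only [he, Real.sSup_empty]; exact hnn t'
    · exact csSup_le_csSup (hbdd t') hne
        (Set.image_mono (Set.inter_subset_inter_right _ (fun p hp => le_trans hp htt')))
  set C : ℝ := sSup (Θ '' K) with hC
  have hCb : ∀ t, h t ≤ max C 0 := by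
    intro t
    rcases Set.eq_empty_or_nonempty (Θ '' (K ∩ {p | ‖π p‖ ≤ t})) with he | hne
    · rw [hh]; simp only [he, Real.sSup_empty]; exact le_max_right _ _
    · refine csSup_le hne ?_
      rintro y ⟨p, hp, rfl⟩
      exact le_max_of_le_left (le_csSup hbddK ⟨p, hp.1, rfl⟩)
  have hthle : ∀ p ∈ K, Θ p ≤ h ‖π p‖ :=
    fun p hp => le_csSup (hbdd _) ⟨p, ⟨hp, by simp⟩, rfl⟩
  have hsmall : ∀ ε : ℝ, 0 < ε → ∃ δ : ℝ, 0 < δ ∧ h δ ≤ ε := by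
    intro ε hε
    set E' : Set E := K ∩ {p | ε ≤ Θ p} with hE'
    have hE'cp : IsCompact E' := hK.inter_right (isClosed_le continuous_const hΘ)
    rcases Set.eq_empty_or_nonempty E' with he | hne
    · refine ⟨1, one_pos, ?_⟩
      rcases Set.eq_empty_or_nonempty (Θ '' (K ∩ {p | ‖π p‖ ≤ 1})) with h1 | h1
      · rw [hh]; simp only [h1, Real.sSup_empty]; exact hε.le
      · refine csSup_le h1 ?_
        rintro y ⟨p, hp, rfl⟩
        by_contra hcon
        push_neg at hcon
        have hpE : p ∈ E' := ⟨hp.1, hcon.le⟩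
        rw [he] at hpE
        exact hpE
    · obtain ⟨p0, hp0, hmin⟩ := hE'cp.exists_isMinOn hne (hπ.norm.continuousOn)
      have hm0 : 0 < ‖π p0‖ := by
        rcases eq_or_lt_of_le (norm_nonneg (π p0)) with h0 | h0
        · exfalso
          have hz : Θ p0 = 0 := hvan p0 hp0.1 (by rw [← norm_eq_zero, ← h0])
          have h2 : ε ≤ Θ p0 := hp0.2
          linarith
        · exact h0
      refine ⟨‖π p0‖ / 2, by linarith, ?_⟩
      rcases Set.eq_empty_or_nonempty (Θ '' (K ∩ {p | ‖π p‖ ≤ ‖π p0‖ / 2})) with h1 | h1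
      · rw [hh]; simp only [h1, Real.sSup_empty]; exact hε.le
      · refine csSup_le h1 ?_
        rintro y ⟨p, hp, rfl⟩
        by_contra hcon
        push_neg at hcon
        have hpE' : p ∈ E' := ⟨hp.1, hcon.le⟩
        have hge := hmin hpE'
        simp only [Set.mem_setOf_eq] at hge
        have h2 := hp.2
        simp only [Set.mem_setOf_eq] at h2
        linarith
  obtain ⟨σ, hσ, hdom⟩ := lemA_classKInf h (max C 0) hmono hnn hCb hsmall
  exact ⟨σ, hσ, fun p hp => (hthle p hp).trans (hdom _ (norm_nonneg _))⟩

set_option maxHeartbeats 4000000 in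
/-- **Proposition 8: bound on the mismatch-induced estimator noise.** -/
theorem mismatch_noise_bound
    {n nu ny nd nr nc nw : ℕ} (S : SSTPData n nu ny nd nr nc)
    (hS : SSTPAssumptions S)
    -- SSTP selection
    (xs : Param nu ny nd nr → Vec n) (us : Param nu ny nd nr → Vec nu)
    (hzs_mem : ∀ β ∈ S.B, (xs β, us β) ∈ S.ZO β.1 β.2.2.2)
    (hzs_opt : ∀ β ∈ S.B, ∀ z ∈ S.ZO β.1 β.2.2.2, S.Vs β (xs β, us β) ≤ S.Vs β z)
    -- the plant and nominal consistency
    (fP : Vec n → Vec nu → Vec nw → Vec n)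
    (hP : Vec n → Vec nu → Vec nw → Vec ny)
    (W : Set (Vec nw)) (hWcp : IsCompact W) (hW0 : (0 : Vec nw) ∈ W)
    (hfP : Continuous fun p : Vec n × Vec nu × Vec nw => fP p.1 p.2.1 p.2.2)
    (hhP : Continuous fun p : Vec n × Vec nu × Vec nw => hP p.1 p.2.1 p.2.2)
    (hconsf : ∀ x ∈ S.X, ∀ u ∈ S.U, S.f x u 0 = fP x u 0)
    (hconsh : ∀ x ∈ S.X, ∀ u ∈ S.U, S.h x u 0 = hP x u 0)
    -- differentiability
    (hg1 : ContDiff ℝ 1 fun p : Vec nu × Vec ny => S.g p.1 p.2)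
    (hf1 : ContDiff ℝ 1 fun p : Vec n × Vec nu × Vec nd => S.f p.1 p.2.1 p.2.2)
    (hh1 : ContDiff ℝ 1 fun p : Vec n × Vec nu × Vec nd => S.h p.1 p.2.1 p.2.2)
    (hfP1 : ∀ wP ∈ W, ContDiff ℝ 1 fun z : Vec n × Vec nu => fP z.1 z.2 wP)
    (hhP1 : ∀ wP ∈ W, ContDiff ℝ 1 fun z : Vec n × Vec nu => hP z.1 z.2 wP)
    (hfP1c : Continuous fun p : (Vec n × Vec nu) × Vec nw =>
      fderiv ℝ (fun z : Vec n × Vec nu => fP z.1 z.2 p.2) p.1)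
    (hhP1c : Continuous fun p : (Vec n × Vec nu) × Vec nw =>
      fderiv ℝ (fun z : Vec n × Vec nu => hP z.1 z.2 p.2) p.1)
    -- mismatch corrections
    (Ac : Set (Vec nr × Vec nu × Vec ny × Vec nw)) (Bc : Set (Param nu ny nd nr))
    (hAc_cp : IsCompact Ac)
    (hAc_sub : Ac ⊆ {α | (α.2.1, α.2.2.1) ∈ S.Zbar ∧ α.2.2.2 ∈ W})
    (hAc0 : (0 : Vec nr × Vec nu × Vec ny × Vec nw) ∈ Ac)
    (hBc_cp : IsCompact Bc) (hBc_sub : Bc ⊆ S.B)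
    (hBc0 : (0 : Param nu ny nd nr) ∈ Bc)
    (xPs : Vec nr × Vec nu × Vec ny × Vec nw → Vec n)
    (ds : Vec nr × Vec nu × Vec ny × Vec nw → Vec nd)
    (hxds_cont : ContinuousOn (fun α => (xPs α, ds α)) Ac)
    (hxds_mem : ∀ α ∈ Ac, xPs α ∈ S.X ∧ ds α ∈ S.D)
    (δ0 : ℝ) (hδ0 : 0 < δ0)
    (hBhat_sub : S.Bhat Bc δ0 ⊆ S.B)
    (hzs_lip : ∃ K : NNReal, LipschitzOnWith K (fun β => (xs β, us β)) (S.Bhat Bc δ0))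
    (hmatch : ∀ α ∈ Ac,
      xPs α = fP (xPs α) (us (α.1, α.2.1, α.2.2.1, ds α)) α.2.2.2 ∧
      S.h (xs (α.1, α.2.1, α.2.2.1, ds α)) (us (α.1, α.2.1, α.2.2.1, ds α)) (ds α) =
        hP (xPs α) (us (α.1, α.2.1, α.2.2.1, ds α)) α.2.2.2)
    (hmatch_unique : ∀ α ∈ Ac, ∀ (xP' : Vec n) (d' : Vec nd), xP' ∈ S.X → d' ∈ S.D →
      xP' = fP xP' (us (α.1, α.2.1, α.2.2.1, d')) α.2.2.2 →
      S.h (xs (α.1, α.2.1, α.2.2.1, d')) (us (α.1, α.2.1, α.2.2.1, d')) d' =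
        hP xP' (us (α.1, α.2.1, α.2.2.1, d')) α.2.2.2 →
      xP' = xPs α ∧ d' = ds α)
    (hdsBc : ∀ α ∈ Ac, (α.1, α.2.1, α.2.2.1, ds α) ∈ Bc)
    (hAc_zero : ∀ α ∈ Ac, ((α.1, α.2.1, α.2.2.1, (0 : Vec nw))) ∈ Ac) :
    ∀ Xc : Set (Vec n), IsCompact Xc → Xc ⊆ S.X →
      ∃ σw σα : ℝ → ℝ, IsClassKInf σw ∧ IsClassKInf σα ∧
        ∀ x ∈ Xc, ∀ u ∈ S.U, ∀ α ∈ Ac, ∀ αp ∈ Ac,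
          ‖((fP (x + (xPs α - xs (α.1, α.2.1, α.2.2.1, ds α))) u α.2.2.2 -
              S.f x u (ds α) - (xPs αp - xs (αp.1, αp.2.1, αp.2.2.1, ds αp)),
            ds αp - ds α,
            hP (x + (xPs α - xs (α.1, α.2.1, α.2.2.1, ds α))) u α.2.2.2 -
              S.h x u (ds α)) : Vec n × Vec nd × Vec ny)‖ ≤
          σw ‖α.2.2.2‖ * ‖((x, u) : Vec n × Vec nu) -
            (xs (α.1, α.2.1, α.2.2.1, ds α), us (α.1, α.2.1, α.2.2.1, ds α))‖ +
          σα ‖αp - α‖ := by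
  intro Xc hXc_cp hXc_sub
  obtain ⟨Kl, hKl⟩ := hzs_lip
  have hzs_contOn : ContinuousOn (fun β => (xs β, us β)) (S.Bhat Bc δ0) := hKl.continuousOn
  have hBcBhat : Bc ⊆ S.Bhat Bc δ0 := by
    intro β hβ
    exact ⟨(hBc_sub hβ).2.1, β.2.2.2, by simpa using hβ, by simp [hδ0.le]⟩
  -- continuity of ds and of β ↦ (xs β, us β) along Ac
  have hds_cont : ContinuousOn ds Ac := hxds_cont.snd
  have hxPs_cont : ContinuousOn xPs Ac := hxds_cont.fst
  have hβf_cont : ContinuousOn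
      (fun α : Vec nr × Vec nu × Vec ny × Vec nw =>
        ((α.1, α.2.1, α.2.2.1, ds α) : Param nu ny nd nr)) Ac := by
    apply ContinuousOn.prodMk (continuous_fst.continuousOn)
    apply ContinuousOn.prodMk ((continuous_fst.comp continuous_snd).continuousOn)
    apply ContinuousOn.prodMk ((continuous_fst.comp (continuous_snd.comp continuous_snd)).continuousOn)
    exact hds_cont
  have hβf_maps : ∀ α ∈ Ac,
      ((α.1, α.2.1, α.2.2.1, ds α) : Param nu ny nd nr) ∈ S.Bhat Bc δ0 :=
    fun α hα => hBcBhat (hdsBc α hα)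
  set Δf : (Vec nr × Vec nu × Vec ny × Vec nw) → Vec n :=
    fun α => xPs α - xs (α.1, α.2.1, α.2.2.1, ds α) with hΔfdef
  have hΔ_cont : ContinuousOn Δf Ac := by
    apply hxPs_cont.sub
    exact (hzs_contOn.comp hβf_cont hβf_maps).fst
  -- Step 1: zero plant disturbance forces zero corrections
  have hzero : ∀ α ∈ Ac, α.2.2.2 = (0 : Vec nw) →
      ds α = 0 ∧ xPs α = xs (α.1, α.2.1, α.2.2.1, (0 : Vec nd)) := by
    intro α hα hw0
    have hβαB : ((α.1, α.2.1, α.2.2.1, ds α) : Param nu ny nd nr) ∈ S.B :=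
      hBc_sub (hdsBc α hα)
    obtain ⟨hxsX, husU, hsteady, hZb, hr⟩ := hzs_mem _ hβαB
    obtain ⟨hmat1, hmat2⟩ := hmatch α hα
    have hxPX : xPs α ∈ S.X := (hxds_mem α hα).1
    rw [hw0] at hmat1 hmat2
    have hcons1 : S.f (xPs α) (us (α.1, α.2.1, α.2.2.1, ds α)) 0
        = fP (xPs α) (us (α.1, α.2.1, α.2.2.1, ds α)) 0 := hconsf _ hxPX _ husU
    have hcons2 : S.h (xPs α) (us (α.1, α.2.1, α.2.2.1, ds α)) 0
        = hP (xPs α) (us (α.1, α.2.1, α.2.2.1, ds α)) 0 := hconsh _ hxPX _ husU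
    have hyeq : S.h (xPs α) (us (α.1, α.2.1, α.2.2.1, ds α)) 0
        = S.h (xs (α.1, α.2.1, α.2.2.1, ds α)) (us (α.1, α.2.1, α.2.2.1, ds α)) (ds α) := by
      rw [hcons2, hmat2]
    have hβ0B : ((α.1, α.2.1, α.2.2.1, (0 : Vec nd)) : Param nu ny nd nr) ∈ S.B := by
      refine ⟨(hAc_sub hα).1, hS.hD0,
        ⟨(xPs α, us (α.1, α.2.1, α.2.2.1, ds α)), hxPX, husU, ?_, ?_, ?_⟩⟩
      · rw [hcons1, ← hmat1]
      · rw [hyeq]; exact hZb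
      · rw [hyeq]; exact hr
    obtain ⟨hxs0X, hus0U, hsteady0, hZb0, hr0⟩ := hzs_mem _ hβ0B
    have huniq := hmatch_unique α hα (xs (α.1, α.2.1, α.2.2.1, (0 : Vec nd)))
      (0 : Vec nd) hxs0X hS.hD0 ?_ ?_
    · exact ⟨huniq.2.symm, huniq.1.symm⟩
    · rw [hw0, ← hconsf _ hxs0X _ hus0U]; exact hsteady0
    · rw [hw0, ← hconsh _ hxs0X _ hus0U]
  -- the big convex compact ball
  have hKzs : IsCompact ((fun β => (xs β, us β)) '' Bc) :=
    hBc_cp.image_of_continuousOn (hzs_contOn.mono hBcBhat)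
  obtain ⟨R, hRsub⟩ :=
    ((hXc_cp.prod hS.hUcp).union hKzs).isBounded.subset_closedBall (0 : Vec n × Vec nu)
  have hball1 : ∀ x ∈ Xc, ∀ u ∈ S.U,
      ((x, u) : Vec n × Vec nu) ∈ Metric.closedBall (0 : Vec n × Vec nu) R :=
    fun x hx u hu => hRsub (Or.inl ⟨hx, hu⟩)
  have hball2 : ∀ β ∈ Bc,
      ((xs β, us β) : Vec n × Vec nu) ∈ Metric.closedBall (0 : Vec n × Vec nu) R :=
    fun β hβ => hRsub (Or.inr ⟨β, hβ, rfl⟩)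
  -- derivative machinery
  set L : (Vec n × Vec nu) →L[ℝ] (Vec n × Vec nu × Vec nd) :=
    (ContinuousLinearMap.fst ℝ (Vec n) (Vec nu)).prod
      ((ContinuousLinearMap.snd ℝ (Vec n) (Vec nu)).prod
        (0 : (Vec n × Vec nu) →L[ℝ] Vec nd)) with hLdef
  set DF : (Vec n × Vec nu) → Vec nd → ((Vec n × Vec nu) →L[ℝ] Vec n) :=
    fun ζ d => (fderiv ℝ (fun p : Vec n × Vec nu × Vec nd => S.f p.1 p.2.1 p.2.2)
      (ζ.1, ζ.2, d)).comp L with hDFdef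
  set DH : (Vec n × Vec nu) → Vec nd → ((Vec n × Vec nu) →L[ℝ] Vec ny) :=
    fun ζ d => (fderiv ℝ (fun p : Vec n × Vec nu × Vec nd => S.h p.1 p.2.1 p.2.2)
      (ζ.1, ζ.2, d)).comp L with hDHdef
  have hinner : ∀ (d : Vec nd) (ζ : Vec n × Vec nu),
      HasFDerivAt (fun z : Vec n × Vec nu => ((z.1, z.2, d) : Vec n × Vec nu × Vec nd)) L ζ := by
    intro d ζ
    have heq : (fun z : Vec n × Vec nu => ((z.1, z.2, d) : Vec n × Vec nu × Vec nd))
        = fun z => L z + ((0, 0, d) : Vec n × Vec nu × Vec nd) := by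
      funext z
      simp [hLdef, Prod.ext_iff]
    rw [heq]
    exact L.hasFDerivAt.add_const _
  have hDF_deriv : ∀ (d : Vec nd) (ζ : Vec n × Vec nu),
      HasFDerivAt (fun z : Vec n × Vec nu => S.f z.1 z.2 d) (DF ζ d) ζ := by
    intro d ζ
    exact ((hf1.differentiable one_ne_zero (ζ.1, ζ.2, d)).hasFDerivAt).comp ζ (hinner d ζ)
  have hDH_deriv : ∀ (d : Vec nd) (ζ : Vec n × Vec nu),
      HasFDerivAt (fun z : Vec n × Vec nu => S.h z.1 z.2 d) (DH ζ d) ζ := by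
    intro d ζ
    exact ((hh1.differentiable one_ne_zero (ζ.1, ζ.2, d)).hasFDerivAt).comp ζ (hinner d ζ)
  have hDFcont : Continuous (fun q : (Vec n × Vec nu) × Vec nd => DF q.1 q.2) := by
    apply Continuous.clm_comp _ continuous_const
    exact (hf1.continuous_fderiv one_ne_zero).comp (by fun_prop)
  have hDHcont : Continuous (fun q : (Vec n × Vec nu) × Vec nd => DH q.1 q.2) := by
    apply Continuous.clm_comp _ continuous_const
    exact (hh1.continuous_fderiv one_ne_zero).comp (by fun_prop)
  set DFP : (Vec n × Vec nu) → Vec nw → ((Vec n × Vec nu) →L[ℝ] Vec n) :=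
    fun ζ w => fderiv ℝ (fun z : Vec n × Vec nu => fP z.1 z.2 w) ζ with hDFPdef
  set DHP : (Vec n × Vec nu) → Vec nw → ((Vec n × Vec nu) →L[ℝ] Vec ny) :=
    fun ζ w => fderiv ℝ (fun z : Vec n × Vec nu => hP z.1 z.2 w) ζ with hDHPdef
  have hDFPcont : Continuous (fun q : (Vec n × Vec nu) × Vec nw => DFP q.1 q.2) := hfP1c
  have hDHPcont : Continuous (fun q : (Vec n × Vec nu) × Vec nw => DHP q.1 q.2) := hhP1c
  have hDFP_deriv : ∀ w ∈ W, ∀ ζ : Vec n × Vec nu,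
      HasFDerivAt (fun z : Vec n × Vec nu => fP z.1 z.2 w) (DFP ζ w) ζ :=
    fun w hw ζ => ((hfP1 w hw).differentiable one_ne_zero ζ).hasFDerivAt
  have hDHP_deriv : ∀ w ∈ W, ∀ ζ : Vec n × Vec nu,
      HasFDerivAt (fun z : Vec n × Vec nu => hP z.1 z.2 w) (DHP ζ w) ζ :=
    fun w hw ζ => ((hhP1 w hw).differentiable one_ne_zero ζ).hasFDerivAt
  have hshiftmap : ∀ (c : Vec n) (ζ : Vec n × Vec nu),
      HasFDerivAt (fun z : Vec n × Vec nu => ((z.1 + c, z.2) : Vec n × Vec nu))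
        (ContinuousLinearMap.id ℝ (Vec n × Vec nu)) ζ := by
    intro c ζ
    have heq : (fun z : Vec n × Vec nu => ((z.1 + c, z.2) : Vec n × Vec nu))
        = fun z => z + ((c, 0) : Vec n × Vec nu) := by
      funext z; simp [Prod.ext_iff]
    rw [heq]
    exact (hasFDerivAt_id ζ).add_const _
  have hDFP_shift : ∀ w ∈ W, ∀ (c : Vec n) (ζ : Vec n × Vec nu),
      HasFDerivAt (fun z : Vec n × Vec nu => fP (z.1 + c) z.2 w) (DFP (ζ.1 + c, ζ.2) w) ζ := by
    intro w hw c ζ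
    have h2 := (hDFP_deriv w hw (ζ.1 + c, ζ.2)).comp ζ (hshiftmap c ζ)
    exact h2
  have hDHP_shift : ∀ w ∈ W, ∀ (c : Vec n) (ζ : Vec n × Vec nu),
      HasFDerivAt (fun z : Vec n × Vec nu => hP (z.1 + c) z.2 w) (DHP (ζ.1 + c, ζ.2) w) ζ := by
    intro w hw c ζ
    have h2 := (hDHP_deriv w hw (ζ.1 + c, ζ.2)).comp ζ (hshiftmap c ζ)
    exact h2
  -- the compact parameter images
  set Pim : Set (Vec n × Vec nd × Vec nw) :=
    (fun α : Vec nr × Vec nu × Vec ny × Vec nw =>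
      ((Δf α, ds α, α.2.2.2) : Vec n × Vec nd × Vec nw)) '' Ac with hPimdef
  have hPimcp : IsCompact Pim := by
    apply hAc_cp.image_of_continuousOn
    exact hΔ_cont.prodMk (hds_cont.prodMk (by fun_prop))
  set Θ : (Vec n × Vec nu) × (Vec n × Vec nd × Vec nw) → ℝ := fun q =>
    ‖DFP (q.1.1 + q.2.1, q.1.2) q.2.2.2 - DFP q.1 0‖ + ‖DF q.1 q.2.2.1 - DF q.1 0‖ +
    (‖DHP (q.1.1 + q.2.1, q.1.2) q.2.2.2 - DHP q.1 0‖ + ‖DH q.1 q.2.2.1 - DH q.1 0‖) with hΘdef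
  have hΘcont : Continuous Θ := by
    have i1 : Continuous fun q : (Vec n × Vec nu) × (Vec n × Vec nd × Vec nw) =>
        (((q.1.1 + q.2.1, q.1.2), q.2.2.2) : (Vec n × Vec nu) × Vec nw) := by fun_prop
    have i2 : Continuous fun q : (Vec n × Vec nu) × (Vec n × Vec nd × Vec nw) =>
        ((q.1, 0) : (Vec n × Vec nu) × Vec nw) := by fun_prop
    have i3 : Continuous fun q : (Vec n × Vec nu) × (Vec n × Vec nd × Vec nw) =>
        ((q.1, q.2.2.1) : (Vec n × Vec nu) × Vec nd) := by fun_prop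
    have i4 : Continuous fun q : (Vec n × Vec nu) × (Vec n × Vec nd × Vec nw) =>
        ((q.1, 0) : (Vec n × Vec nu) × Vec nd) := by fun_prop
    have c1 : Continuous fun q : (Vec n × Vec nu) × (Vec n × Vec nd × Vec nw) =>
        DFP (q.1.1 + q.2.1, q.1.2) q.2.2.2 := hDFPcont.comp i1
    have c2 : Continuous fun q : (Vec n × Vec nu) × (Vec n × Vec nd × Vec nw) =>
        DFP q.1 0 := hDFPcont.comp i2
    have c3 : Continuous fun q : (Vec n × Vec nu) × (Vec n × Vec nd × Vec nw) =>
        DF q.1 q.2.2.1 := hDFcont.comp i3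
    have c4 : Continuous fun q : (Vec n × Vec nu) × (Vec n × Vec nd × Vec nw) =>
        DF q.1 0 := hDFcont.comp i4
    have c5 : Continuous fun q : (Vec n × Vec nu) × (Vec n × Vec nd × Vec nw) =>
        DHP (q.1.1 + q.2.1, q.1.2) q.2.2.2 := hDHPcont.comp i1
    have c6 : Continuous fun q : (Vec n × Vec nu) × (Vec n × Vec nd × Vec nw) =>
        DHP q.1 0 := hDHPcont.comp i2
    have c7 : Continuous fun q : (Vec n × Vec nu) × (Vec n × Vec nd × Vec nw) =>
        DH q.1 q.2.2.1 := hDHcont.comp i3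
    have c8 : Continuous fun q : (Vec n × Vec nu) × (Vec n × Vec nd × Vec nw) =>
        DH q.1 0 := hDHcont.comp i4
    rw [hΘdef]
    exact (((c1.sub c2).norm.add (c3.sub c4).norm).add
      ((c5.sub c6).norm.add (c7.sub c8).norm))
  set K1 : Set ((Vec n × Vec nu) × (Vec n × Vec nd × Vec nw)) :=
    (Metric.closedBall (0 : Vec n × Vec nu) R) ×ˢ Pim with hK1def
  have hK1cp : IsCompact K1 := (isCompact_closedBall _ _).prod hPimcp
  have hvan1 : ∀ p ∈ K1, (fun q : (Vec n × Vec nu) × (Vec n × Vec nd × Vec nw) => q.2.2.2) p = 0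
      → Θ p = 0 := by
    rintro ⟨ζ, p⟩ ⟨hζ, α, hα, rfl⟩ hw0
    obtain ⟨hds0, hxPs0⟩ := hzero α hα hw0
    have hΔ0 : Δf α = 0 := by
      rw [hΔfdef]
      simp only [hds0, hxPs0, sub_self]
    have hw0' : α.2.2.2 = 0 := hw0
    simp [hΘdef, hΔ0, hds0, hw0']
  obtain ⟨σw, hσw, hσwbd⟩ := lemC_classKInf K1 hK1cp Θ hΘcont
    (fun q => by simp only [hΘdef]; positivity)
    (fun q => q.2.2.2) (by fun_prop) hvan1
  set P2 : Set ((Vec nr × Vec nu × Vec ny × Vec nw) × Vec n × Vec nd) :=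
    (fun α : Vec nr × Vec nu × Vec ny × Vec nw => (α, Δf α, ds α)) '' Ac with hP2def
  have hP2cp : IsCompact P2 := by
    apply hAc_cp.image_of_continuousOn
    exact (continuousOn_id).prodMk (hΔ_cont.prodMk hds_cont)
  have hvan2 : ∀ p ∈ P2 ×ˢ P2,
      (fun q : ((Vec nr × Vec nu × Vec ny × Vec nw) × Vec n × Vec nd) ×
        ((Vec nr × Vec nu × Vec ny × Vec nw) × Vec n × Vec nd) => q.2.1 - q.1.1) p = 0 →
      (fun q : ((Vec nr × Vec nu × Vec ny × Vec nw) × Vec n × Vec nd) ×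
        ((Vec nr × Vec nu × Vec ny × Vec nw) × Vec n × Vec nd) =>
        ‖q.1.2.1 - q.2.2.1‖ + ‖q.2.2.2 - q.1.2.2‖) p = 0 := by
    rintro ⟨p, p'⟩ ⟨⟨α, hα, rfl⟩, ⟨α', hα', rfl⟩⟩ heq
    have hαα : α' = α := sub_eq_zero.mp heq
    subst hαα
    simp
  obtain ⟨σα, hσα, hσαbd⟩ := lemC_classKInf (P2 ×ˢ P2) (hP2cp.prod hP2cp)
    (fun q => ‖q.1.2.1 - q.2.2.1‖ + ‖q.2.2.2 - q.1.2.2‖)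
    (by fun_prop) (fun q => by positivity)
    (fun q => q.2.1 - q.1.1) (by fun_prop) hvan2
  -- mean value bounds
  have hMVTf : ∀ α ∈ Ac, ∀ x1 u1 x2 u2,
      ((x1, u1) : Vec n × Vec nu) ∈ Metric.closedBall (0 : Vec n × Vec nu) R →
      ((x2, u2) : Vec n × Vec nu) ∈ Metric.closedBall (0 : Vec n × Vec nu) R →
      ‖(fP (x1 + Δf α) u1 α.2.2.2 - fP x1 u1 0 - S.f x1 u1 (ds α) + S.f x1 u1 0) -
        (fP (x2 + Δf α) u2 α.2.2.2 - fP x2 u2 0 - S.f x2 u2 (ds α) + S.f x2 u2 0)‖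
        ≤ σw ‖α.2.2.2‖ * ‖((x1, u1) : Vec n × Vec nu) - (x2, u2)‖ := by
    intro α hα x1 u1 x2 u2 hm1 hm2
    have hwW : α.2.2.2 ∈ W := (hAc_sub hα).2
    have hgder : ∀ ζ : Vec n × Vec nu, HasFDerivAt
        (fun z : Vec n × Vec nu =>
          fP (z.1 + Δf α) z.2 α.2.2.2 - fP z.1 z.2 0 - S.f z.1 z.2 (ds α) + S.f z.1 z.2 0)
        (DFP (ζ.1 + Δf α, ζ.2) α.2.2.2 - DFP ζ 0 - DF ζ (ds α) + DF ζ 0) ζ :=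
      fun ζ => ((((hDFP_shift _ hwW (Δf α) ζ).sub (hDFP_deriv 0 hW0 ζ)).sub
        (hDF_deriv (ds α) ζ)).add (hDF_deriv 0 ζ))
    have hbound : ∀ ζ ∈ Metric.closedBall (0 : Vec n × Vec nu) R,
        ‖DFP (ζ.1 + Δf α, ζ.2) α.2.2.2 - DFP ζ 0 - DF ζ (ds α) + DF ζ 0‖ ≤ σw ‖α.2.2.2‖ := by
      intro ζ hζ
      have hmem : ((ζ, (Δf α, ds α, α.2.2.2)) :
          (Vec n × Vec nu) × (Vec n × Vec nd × Vec nw)) ∈ K1 := ⟨hζ, ⟨α, hα, rfl⟩⟩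
      have hb := hσwbd _ hmem
      simp only [hΘdef] at hb
      have he : DFP (ζ.1 + Δf α, ζ.2) α.2.2.2 - DFP ζ 0 - DF ζ (ds α) + DF ζ 0
          = (DFP (ζ.1 + Δf α, ζ.2) α.2.2.2 - DFP ζ 0) - (DF ζ (ds α) - DF ζ 0) := by abel
      rw [he]
      refine le_trans (norm_sub_le _ _) (le_trans ?_ hb)
      have n1 := norm_nonneg (DHP (ζ.1 + Δf α, ζ.2) α.2.2.2 - DHP ζ 0)
      have n2 := norm_nonneg (DH ζ (ds α) - DH ζ 0)
      linarith
    have hfin := mvt_explicit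
      (fun z : Vec n × Vec nu =>
        fP (z.1 + Δf α) z.2 α.2.2.2 - fP z.1 z.2 0 - S.f z.1 z.2 (ds α) + S.f z.1 z.2 0)
      (fun ζ : Vec n × Vec nu =>
        DFP (ζ.1 + Δf α, ζ.2) α.2.2.2 - DFP ζ 0 - DF ζ (ds α) + DF ζ 0)
      (Metric.closedBall (0 : Vec n × Vec nu) R) (convex_closedBall _ _)
      hgder (σw ‖α.2.2.2‖) hbound ((x1, u1) : Vec n × Vec nu) ((x2, u2) : Vec n × Vec nu) hm1 hm2
    exact hfin
  have hMVTh : ∀ α ∈ Ac, ∀ x1 u1 x2 u2,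
      ((x1, u1) : Vec n × Vec nu) ∈ Metric.closedBall (0 : Vec n × Vec nu) R →
      ((x2, u2) : Vec n × Vec nu) ∈ Metric.closedBall (0 : Vec n × Vec nu) R →
      ‖(hP (x1 + Δf α) u1 α.2.2.2 - hP x1 u1 0 - S.h x1 u1 (ds α) + S.h x1 u1 0) -
        (hP (x2 + Δf α) u2 α.2.2.2 - hP x2 u2 0 - S.h x2 u2 (ds α) + S.h x2 u2 0)‖
        ≤ σw ‖α.2.2.2‖ * ‖((x1, u1) : Vec n × Vec nu) - (x2, u2)‖ := by
    intro α hα x1 u1 x2 u2 hm1 hm2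
    have hwW : α.2.2.2 ∈ W := (hAc_sub hα).2
    have hgder : ∀ ζ : Vec n × Vec nu, HasFDerivAt
        (fun z : Vec n × Vec nu =>
          hP (z.1 + Δf α) z.2 α.2.2.2 - hP z.1 z.2 0 - S.h z.1 z.2 (ds α) + S.h z.1 z.2 0)
        (DHP (ζ.1 + Δf α, ζ.2) α.2.2.2 - DHP ζ 0 - DH ζ (ds α) + DH ζ 0) ζ :=
      fun ζ => ((((hDHP_shift _ hwW (Δf α) ζ).sub (hDHP_deriv 0 hW0 ζ)).sub
        (hDH_deriv (ds α) ζ)).add (hDH_deriv 0 ζ))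
    have hbound : ∀ ζ ∈ Metric.closedBall (0 : Vec n × Vec nu) R,
        ‖DHP (ζ.1 + Δf α, ζ.2) α.2.2.2 - DHP ζ 0 - DH ζ (ds α) + DH ζ 0‖ ≤ σw ‖α.2.2.2‖ := by
      intro ζ hζ
      have hmem : ((ζ, (Δf α, ds α, α.2.2.2)) :
          (Vec n × Vec nu) × (Vec n × Vec nd × Vec nw)) ∈ K1 := ⟨hζ, ⟨α, hα, rfl⟩⟩
      have hb := hσwbd _ hmem
      simp only [hΘdef] at hb
      have he : DHP (ζ.1 + Δf α, ζ.2) α.2.2.2 - DHP ζ 0 - DH ζ (ds α) + DH ζ 0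
          = (DHP (ζ.1 + Δf α, ζ.2) α.2.2.2 - DHP ζ 0) - (DH ζ (ds α) - DH ζ 0) := by abel
      rw [he]
      refine le_trans (norm_sub_le _ _) (le_trans ?_ hb)
      have n1 := norm_nonneg (DFP (ζ.1 + Δf α, ζ.2) α.2.2.2 - DFP ζ 0)
      have n2 := norm_nonneg (DF ζ (ds α) - DF ζ 0)
      linarith
    have hfin := mvt_explicit
      (fun z : Vec n × Vec nu =>
        hP (z.1 + Δf α) z.2 α.2.2.2 - hP z.1 z.2 0 - S.h z.1 z.2 (ds α) + S.h z.1 z.2 0)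
      (fun ζ : Vec n × Vec nu =>
        DHP (ζ.1 + Δf α, ζ.2) α.2.2.2 - DHP ζ 0 - DH ζ (ds α) + DH ζ 0)
      (Metric.closedBall (0 : Vec n × Vec nu) R) (convex_closedBall _ _)
      hgder (σw ‖α.2.2.2‖) hbound ((x1, u1) : Vec n × Vec nu) ((x2, u2) : Vec n × Vec nu) hm1 hm2
    exact hfin
  -- final assembly
  refine ⟨σw, σα, hσw, hσα, ?_⟩
  intro x hx u hu α hα αp hαp
  have hfold : xPs α - xs (α.1, α.2.1, α.2.2.1, ds α) = Δf α := rfl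
  have hfoldp : xPs αp - xs (αp.1, αp.2.1, αp.2.2.1, ds αp) = Δf αp := rfl
  rw [hfold, hfoldp]
  have hβαBc : ((α.1, α.2.1, α.2.2.1, ds α) : Param nu ny nd nr) ∈ Bc := hdsBc α hα
  have hβαB : ((α.1, α.2.1, α.2.2.1, ds α) : Param nu ny nd nr) ∈ S.B := hBc_sub hβαBc
  obtain ⟨hxsX, husU, hsteady, hZb, hr⟩ := hzs_mem _ hβαB
  obtain ⟨hmat1, hmat2⟩ := hmatch α hα
  set β : Param nu ny nd nr := (α.1, α.2.1, α.2.2.1, ds α) with hβdef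
  have hsteady' : xs β = S.f (xs β) (us β) (ds α) := hsteady
  have hz1 : ((x, u) : Vec n × Vec nu) ∈ Metric.closedBall (0 : Vec n × Vec nu) R :=
    hball1 x hx u hu
  have hz2 : ((xs β, us β) : Vec n × Vec nu) ∈ Metric.closedBall (0 : Vec n × Vec nu) R :=
    hball2 β hβαBc
  have hcx : S.f x u 0 = fP x u 0 := hconsf x (hXc_sub hx) u hu
  have hcs : S.f (xs β) (us β) 0 = fP (xs β) (us β) 0 := hconsf _ hxsX _ husU
  have hcxh : S.h x u 0 = hP x u 0 := hconsh x (hXc_sub hx) u hu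
  have hcsh : S.h (xs β) (us β) 0 = hP (xs β) (us β) 0 := hconsh _ hxsX _ husU
  have hΔadd : xs β + Δf α = xPs α := by
    rw [hΔfdef]
    show xs β + (xPs α - xs β) = xPs α
    abel
  have hMf := hMVTf α hα x u (xs β) (us β) hz1 hz2
  have hMh := hMVTh α hα x u (xs β) (us β) hz1 hz2
  have e1 : fP (x + Δf α) u α.2.2.2 - fP x u 0 - S.f x u (ds α) + S.f x u 0
      = fP (x + Δf α) u α.2.2.2 - S.f x u (ds α) := by
    rw [← hcx]; abel
  have e2 : fP (xs β + Δf α) (us β) α.2.2.2 - fP (xs β) (us β) 0 -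
      S.f (xs β) (us β) (ds α) + S.f (xs β) (us β) 0 = Δf α := by
    have hΔfa : Δf α = xPs α - xs β := rfl
    rw [hΔadd, ← hmat1, ← hcs, ← hsteady', hΔfa]
    abel
  have e1h : hP (x + Δf α) u α.2.2.2 - hP x u 0 - S.h x u (ds α) + S.h x u 0
      = hP (x + Δf α) u α.2.2.2 - S.h x u (ds α) := by
    rw [← hcxh]; abel
  have e2h : hP (xs β + Δf α) (us β) α.2.2.2 - hP (xs β) (us β) 0 -
      S.h (xs β) (us β) (ds α) + S.h (xs β) (us β) 0 = 0 := by
    rw [hΔadd, ← hmat2, ← hcsh]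
    abel
  rw [e1, e2] at hMf
  rw [e1h, e2h, sub_zero] at hMh
  -- σα bound
  have hq := hσαbd ((α, Δf α, ds α), (αp, Δf αp, ds αp)) ⟨⟨α, hα, rfl⟩, ⟨αp, hαp, rfl⟩⟩
  -- hq : ‖Δf α - Δf αp‖ + ‖ds αp - ds α‖ ≤ σα ‖αp - α‖
  have hr0 : (0:ℝ) ≤ ‖((x, u) : Vec n × Vec nu) - (xs β, us β)‖ := norm_nonneg _
  have hσw0 : (0:ℝ) ≤ σw ‖α.2.2.2‖ := hσw.1.2.2.2 _ (norm_nonneg _)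
  have hσα0 : (0:ℝ) ≤ σα ‖αp - α‖ := hσα.1.2.2.2 _ (norm_nonneg _)
  have hnorm : ‖((fP (x + Δf α) u α.2.2.2 - S.f x u (ds α) - Δf αp,
      ds αp - ds α,
      hP (x + Δf α) u α.2.2.2 - S.h x u (ds α)) : Vec n × Vec nd × Vec ny)‖
      = max ‖fP (x + Δf α) u α.2.2.2 - S.f x u (ds α) - Δf αp‖
        (max ‖ds αp - ds α‖ ‖hP (x + Δf α) u α.2.2.2 - S.h x u (ds α)‖) := rfl
  rw [hnorm]
  have hc1 : ‖fP (x + Δf α) u α.2.2.2 - S.f x u (ds α) - Δf αp‖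
      ≤ σw ‖α.2.2.2‖ * ‖((x, u) : Vec n × Vec nu) - (xs β, us β)‖ + σα ‖αp - α‖ := by
    have hsplit : fP (x + Δf α) u α.2.2.2 - S.f x u (ds α) - Δf αp
        = (fP (x + Δf α) u α.2.2.2 - S.f x u (ds α) - Δf α) + (Δf α - Δf αp) := by abel
    rw [hsplit]
    refine le_trans (norm_add_le _ _) ?_
    have h2 : ‖Δf α - Δf αp‖ ≤ σα ‖αp - α‖ := by
      have := norm_nonneg (ds αp - ds α)
      linarith
    linarith [hMf]
  have hc2 : ‖ds αp - ds α‖ ≤ σw ‖α.2.2.2‖ * ‖((x, u) : Vec n × Vec nu) - (xs β, us β)‖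
      + σα ‖αp - α‖ := by
    have h2 : ‖ds αp - ds α‖ ≤ σα ‖αp - α‖ := by
      have := norm_nonneg (Δf α - Δf αp)
      linarith
    linarith [mul_nonneg hσw0 hr0]
  have hc3 : ‖hP (x + Δf α) u α.2.2.2 - S.h x u (ds α)‖
      ≤ σw ‖α.2.2.2‖ * ‖((x, u) : Vec n × Vec nu) - (xs β, us β)‖ + σα ‖αp - α‖ := by
    linarith [hMh, hσα0]
  exact max_le hc1 (max_le hc2 hc3)
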